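/- Let G be a topological group. For each positive integer n, let t_n denote the number of continuous homomorphisms from G to the symmetric group S_n (with the discrete topology), set t_0 = 1, and let M_n denote the number of open subgroups of G of index n; assume all of these sets are finite (this holds when G is topologically finitely generated). Then in the formal power series ring ℚ[[x]] one has exp( Σ_{n ≥ 1} (M_n / n) x^n ) = Σ_{n ≥ 0} (t_n / n!) x^n, i.e. exp( Σ_H x^{[G:H]} / [G:H] ) = Σ_{n ≥ 0} (t_n / n!) x^n, where H runs over the open subgroups of G of finite index. -/

import Mathlib

/-- The number of continuous homomorphisms `G → S_n`, where the symmetric group `S_n`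
carries the discrete topology. -/
noncomputable def contHomCount (G : Type*) [Group G] [TopologicalSpace G] (n : ℕ) : ℕ :=
  Nat.card {φ : G →* Equiv.Perm (Fin n) // @Continuous G (Equiv.Perm (Fin n)) _ ⊥ ⇑φ}

/-- The number of open subgroups of `G` of index `n`. -/
noncomputable def openSubgroupCount (G : Type*) [Group G] [TopologicalSpace G] (n : ℕ) : ℕ :=
  Nat.card {H : Subgroup G // IsOpen (H : Set G) ∧ H.index = n}

/-- The formal exponential `exp` composed with a power series `A` (with zero constant
term): the `n`-th coefficient of `exp ∘ A` is `∑_{k=0}^{n} (coeff n of A^k) / k!`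
(for `A` with zero constant term, `coeff n (A^k) = 0` when `k > n`). -/
noncomputable def expComp (A : PowerSeries ℚ) : PowerSeries ℚ :=
  PowerSeries.mk fun n =>
    ∑ k ∈ Finset.range (n + 1), (PowerSeries.coeff n (A ^ k)) / (k.factorial : ℚ)

set_option linter.unusedSectionVars false

section WohlfahrtAux

open PowerSeries Finset Equiv


lemma coeff_pow_zero_of_lt {A : PowerSeries ℚ} (hA : constantCoeff A = 0)
    {m k : ℕ} (h : m < k) : coeff m (A ^ k) = 0 := by
  have hdvd : (X : PowerSeries ℚ) ^ k ∣ A ^ k := pow_dvd_pow_of_dvd (X_dvd_iff.mpr hA) k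
  exact (X_pow_dvd_iff.mp hdvd) m h

lemma coeff_expComp (A : PowerSeries ℚ) (n : ℕ) :
    coeff n (expComp A) =
      ∑ k ∈ range (n + 1), (coeff n (A ^ k)) / (k.factorial : ℚ) := by
  simp [expComp]

lemma coeff_expComp_of_le (A : PowerSeries ℚ) (hA : constantCoeff A = 0)
    {n m : ℕ} (h : n ≤ m) :
    coeff n (expComp A) =
      ∑ k ∈ range (m + 1), (coeff n (A ^ k)) / (k.factorial : ℚ) := by
  rw [coeff_expComp]
  refine Finset.sum_subset (Finset.range_subset_range.mpr (by omega : n + 1 ≤ m + 1)) ?_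
  intro k hk hk'
  simp only [mem_range] at hk hk'
  rw [coeff_pow_zero_of_lt hA (by omega), zero_div]

lemma expComp_coeff_zero (A : PowerSeries ℚ) : coeff 0 (expComp A) = 1 := by
  simp [coeff_expComp]

lemma expComp_coeff_succ (A : PowerSeries ℚ) (hA : constantCoeff A = 0) (n : ℕ) :
    ((n : ℚ) + 1) * coeff (n + 1) (expComp A) =
      ∑ j ∈ range (n + 1),
        coeff j (expComp A) * (((n + 1 - j : ℕ) : ℚ) * coeff (n + 1 - j) A) := by
  rw [coeff_expComp, Finset.mul_sum]
  have step1 : ∀ k ∈ range (n + 2),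
      ((n : ℚ) + 1) * (coeff (n + 1) (A ^ k) / (k.factorial : ℚ)) =
        (k : ℚ) * coeff n (A ^ (k - 1) * d⁄dX ℚ A) / (k.factorial : ℚ) := by
    intro k _
    have hd : coeff n (d⁄dX ℚ (A ^ k)) = coeff (n + 1) (A ^ k) * ((n : ℚ) + 1) :=
      PowerSeries.coeff_derivative _ n
    have hlp : coeff n (d⁄dX ℚ (A ^ k)) = (k : ℚ) * coeff n (A ^ (k - 1) * d⁄dX ℚ A) := by
      rw [Derivation.leibniz_pow, smul_eq_mul (α := ℚ⟦X⟧), map_nsmul, nsmul_eq_mul]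
    rw [mul_div_assoc', mul_comm ((n:ℚ)+1) _, ← hd, hlp, mul_div_assoc]
  rw [Finset.sum_congr rfl step1]
  -- drop k = 0 term and reindex k = j+1
  rw [Finset.sum_range_succ'] -- ∑_{k<n+2} f k = ∑_{j<n+1} f (j+1) + f 0
  simp only [Nat.cast_zero, zero_mul, zero_div, add_zero, Nat.add_sub_cancel]
  have step2 : ∀ j ∈ range (n + 1),
      ((j : ℚ) + 1) * coeff n (A ^ j * d⁄dX ℚ A) / ((j + 1).factorial : ℚ) =
        coeff n (A ^ j * d⁄dX ℚ A) / (j.factorial : ℚ) := by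
    intro j _
    rw [Nat.factorial_succ, Nat.cast_mul, Nat.cast_add, Nat.cast_one,
      mul_div_mul_left _ _ (by positivity : ((j:ℚ) + 1) ≠ 0)]
  rw [Finset.sum_congr rfl (by exact_mod_cast step2)]
  -- expand product coefficient and swap
  have step3 : ∀ j ∈ range (n + 1),
      coeff n (A ^ j * d⁄dX ℚ A) / (j.factorial : ℚ) =
        ∑ i ∈ range (n + 1),
          (coeff i (A ^ j) / (j.factorial : ℚ)) *
            (((n - i : ℕ) : ℚ) + 1) * coeff (n - i + 1) A := by
    intro j _
    rw [PowerSeries.coeff_mul, Finset.Nat.sum_antidiagonal_eq_sum_range_succ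
      (fun a b => coeff a (A ^ j) * coeff b (d⁄dX ℚ A)), Finset.sum_div]
    refine Finset.sum_congr rfl fun i _ => ?_
    rw [PowerSeries.coeff_derivative]
    ring
  rw [Finset.sum_congr rfl step3, Finset.sum_comm]
  refine Finset.sum_congr rfl fun i hi => ?_
  simp only [mem_range] at hi
  rw [← Finset.sum_mul, ← Finset.sum_mul]
  have : ∑ j ∈ range (n + 1), coeff i (A ^ j) / (j.factorial : ℚ) = coeff i (expComp A) :=
    (coeff_expComp_of_le A hA (by omega)).symm
  rw [this]
  have h1 : n + 1 - i = n - i + 1 := by omega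
  rw [h1]
  push_cast
  ring


section CHom
variable (G : Type*) [Group G] [TopologicalSpace G]

lemma continuous_bot_iff {X : Type*} (f : G → X) :
    @Continuous G X _ ⊥ f ↔ ∀ x : X, IsOpen (f ⁻¹' {x}) := by
  letI : TopologicalSpace X := ⊥
  haveI := discreteTopology_bot X
  constructor
  · intro h x
    exact h.isOpen_preimage _ (isOpen_discrete _)
  · intro h
    refine continuous_def.mpr fun s _ => ?_
    have hs : f ⁻¹' s = ⋃ x ∈ s, f ⁻¹' {x} := by ext g; simp
    rw [hs]; exact isOpen_biUnion fun x _ => h x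

def CHom (β : Type*) := {φ : G →* Equiv.Perm β // @Continuous G (Equiv.Perm β) _ ⊥ ⇑φ}

def permCongrHom {β γ : Type*} (e : β ≃ γ) : Equiv.Perm β →* Equiv.Perm γ where
  toFun := e.permCongr
  map_one' := by ext x; simp
  map_mul' σ τ := by ext x; simp [Equiv.permCongr_apply]

@[simp] lemma permCongrHom_apply {β γ : Type*} (e : β ≃ γ) (σ : Equiv.Perm β) (x : γ) :
    _root_.permCongrHom e σ x = e (σ (e.symm x)) := rfl

variable {G}

def CHom.congr {β γ : Type*} (e : β ≃ γ) : CHom G β ≃ CHom G γ where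
  toFun φ := ⟨(_root_.permCongrHom e).comp φ.1, by
    rw [MonoidHom.coe_comp]
    exact @Continuous.comp G (Equiv.Perm β) (Equiv.Perm γ) _ ⊥ ⊥ ⇑φ.1 ⇑(_root_.permCongrHom e)
      continuous_bot φ.2⟩
  invFun φ := ⟨(_root_.permCongrHom e.symm).comp φ.1, by
    rw [MonoidHom.coe_comp]
    exact @Continuous.comp G (Equiv.Perm γ) (Equiv.Perm β) _ ⊥ ⊥ ⇑φ.1 ⇑(_root_.permCongrHom e.symm)
      continuous_bot φ.2⟩
  left_inv φ := by apply Subtype.ext; ext g x; simp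
  right_inv φ := by apply Subtype.ext; ext g x; simp

lemma CHom.isOpen_preimage {β : Type*} (ψ : CHom G β) (s : Set (Equiv.Perm β)) :
    IsOpen (⇑ψ.1 ⁻¹' s) := by
  letI : TopologicalSpace (Equiv.Perm β) := ⊥
  haveI := discreteTopology_bot (Equiv.Perm β)
  exact ψ.2.isOpen_preimage _ (isOpen_discrete _)

end CHom

section Trans

variable {G : Type*} [Group G] [TopologicalSpace G] [IsTopologicalGroup G]
variable {β : Type*}

/-- The stabilizer of `b` for a continuous `G`-action on `β`. -/
def stabC (ψ : CHom G β) (b : β) : Subgroup G :=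
  Subgroup.comap ψ.1 (MulAction.stabilizer (Equiv.Perm β) b)

lemma mem_stabC {ψ : CHom G β} {b : β} {g : G} : g ∈ stabC ψ b ↔ ψ.1 g b = b := Iff.rfl

lemma isOpen_stabC (ψ : CHom G β) (b : β) : IsOpen ((stabC ψ b : Subgroup G) : Set G) := by
  have h : ((stabC ψ b : Subgroup G) : Set G) = ⇑ψ.1 ⁻¹' {σ | σ b = b} := by
    ext g; simp [SetLike.mem_coe, mem_stabC]
  rw [h]; exact CHom.isOpen_preimage ψ _

/-- Transitive pointed continuous actions. -/
def TransCHom (G : Type*) [Group G] [TopologicalSpace G] (β : Type*) (b : β) :=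
  {ψ : CHom G β // ∀ x : β, ∃ g : G, ψ.1 g b = x}

/-- Open subgroups of index `k`. -/
def Idx (G : Type*) [Group G] [TopologicalSpace G] (k : ℕ) :=
  {H : Subgroup G // IsOpen (H : Set G) ∧ H.index = k}

/-- The pointed coset-space equivalence attached to a pointed transitive action. -/
noncomputable def quotEquiv (ψ : CHom G β) (b : β) (H : Subgroup G) (hH : stabC ψ b = H)
    (htr : ∀ x : β, ∃ g : G, ψ.1 g b = x) :
    {e : G ⧸ H ≃ β // e ((1 : G) : G ⧸ H) = b} := by
  have key : ∀ g g' : G, ((g : G ⧸ H) = (g' : G ⧸ H)) ↔ ψ.1 g b = ψ.1 g' b := by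
    intro g g'
    rw [QuotientGroup.eq, ← hH, mem_stabC, map_mul, map_inv]
    constructor
    · intro h
      have := congrArg (ψ.1 g) h
      simpa using this.symm
    · intro h
      simp [Equiv.Perm.mul_apply, ← h]
  have wd : ∀ g g' : G, @Setoid.r _ (QuotientGroup.leftRel H) g g' → ψ.1 g b = ψ.1 g' b := by
    intro g g' hr
    rw [QuotientGroup.leftRel_apply] at hr
    exact (key g g').mp (QuotientGroup.eq.mpr hr)
  let f : G ⧸ H → β := fun q => Quotient.liftOn' q (fun g => ψ.1 g b) wd
  have hf : ∀ g : G, f ((g : G) : G ⧸ H) = ψ.1 g b := fun g => rfl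
  have hbij : Function.Bijective f := by
    constructor
    · intro q q'
      induction q using QuotientGroup.induction_on
      induction q' using QuotientGroup.induction_on
      rw [hf, hf]
      intro h
      exact (key _ _).mpr h
    · intro x
      obtain ⟨g, hg⟩ := htr x
      exact ⟨(g : G ⧸ H), by rw [hf, hg]⟩
  refine ⟨Equiv.ofBijective f hbij, ?_⟩
  show f ((1 : G) : G ⧸ H) = b
  simpa using hf 1

@[simp] lemma quotEquiv_apply_mk (ψ : CHom G β) (b : β) (H : Subgroup G) (hH : stabC ψ b = H)
    (htr : ∀ x : β, ∃ g : G, ψ.1 g b = x) (g : G) :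
    (quotEquiv ψ b H hH htr).1 ((g : G) : G ⧸ H) = ψ.1 g b := rfl

lemma index_stabC (ψ : CHom G β) (b : β) (htr : ∀ x : β, ∃ g : G, ψ.1 g b = x) :
    (stabC ψ b).index = Nat.card β := by
  rw [Subgroup.index, Nat.card_congr (quotEquiv ψ b _ rfl htr).1]

/-- The continuous action attached to an open finite-index subgroup and a coset bijection. -/
noncomputable def chomOfQuot (H : Subgroup G) (hHo : IsOpen (H : Set G)) (hne : H.index ≠ 0)
    (e : G ⧸ H ≃ β) : CHom G β := by
  haveI : Finite (G ⧸ H) := by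
    have : 0 < Nat.card (G ⧸ H) := Nat.pos_of_ne_zero hne
    exact (Nat.card_pos_iff.mp this).2
  refine ⟨(_root_.permCongrHom e).comp (MulAction.toPermHom G (G ⧸ H)), ?_⟩
  rw [(continuous_bot_iff G _)]
  intro σ
  have hfib : (⇑((_root_.permCongrHom e).comp (MulAction.toPermHom G (G ⧸ H))) ⁻¹' {σ}) =
      ⋂ q : G ⧸ H, {g : G | g • q = e.symm (σ (e q))} := by
    ext g
    simp only [Set.mem_preimage, Set.mem_singleton_iff, Set.mem_iInter, Set.mem_setOf_eq,
      MonoidHom.coe_comp, Function.comp_apply]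
    constructor
    · intro h q
      have := congrArg (fun τ : Equiv.Perm β => τ (e q)) h
      simp only [_root_.permCongrHom_apply, MulAction.toPermHom_apply, MulAction.toPerm_apply,
        Equiv.symm_apply_apply] at this ⊢
      rw [← this, Equiv.symm_apply_apply]
    · intro h
      ext x
      have := h (e.symm x)
      simp only [_root_.permCongrHom_apply, MulAction.toPermHom_apply, MulAction.toPerm_apply,
        Equiv.apply_symm_apply] at this ⊢
      rw [this, Equiv.apply_symm_apply]
  rw [hfib]
  refine isOpen_iInter_of_finite fun q => ?_
  obtain ⟨h, rfl⟩ := QuotientGroup.mk_surjective q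
  obtain ⟨h', hy⟩ := QuotientGroup.mk_surjective (e.symm (σ (e (h : G ⧸ H))))
  rw [← hy]
  have hset : {g : G | g • ((h : G) : G ⧸ H) = ((h' : G) : G ⧸ H)} =
      (fun g : G => (g * h)⁻¹ * h') ⁻¹' (H : Set G) := by
    ext g
    simp only [Set.mem_setOf_eq, Set.mem_preimage, SetLike.mem_coe]
    rw [MulAction.Quotient.smul_mk, smul_eq_mul, QuotientGroup.eq]
  rw [hset]
  exact hHo.preimage (by fun_prop)

@[simp] lemma chomOfQuot_apply (H : Subgroup G) (hHo : IsOpen (H : Set G)) (hne : H.index ≠ 0)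
    (e : G ⧸ H ≃ β) (g : G) (x : β) :
    (chomOfQuot H hHo hne e).1 g x = e (g • e.symm x) := rfl

lemma chomOfQuot_trans (H : Subgroup G) (hHo : IsOpen (H : Set G)) (hne : H.index ≠ 0)
    (e : G ⧸ H ≃ β) {b : β} (he : e ((1 : G) : G ⧸ H) = b) :
    ∀ x : β, ∃ g : G, (chomOfQuot H hHo hne e).1 g b = x := by
  intro x
  obtain ⟨g, hg⟩ := QuotientGroup.mk_surjective (e.symm x)
  refine ⟨g, ?_⟩
  rw [chomOfQuot_apply, ← he, Equiv.symm_apply_apply]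
  have : g • ((1 : G) : G ⧸ H) = ((g : G) : G ⧸ H) := by
    rw [MulAction.Quotient.smul_mk, smul_eq_mul, mul_one]
  rw [this, hg, Equiv.apply_symm_apply]

lemma stabC_chomOfQuot (H : Subgroup G) (hHo : IsOpen (H : Set G)) (hne : H.index ≠ 0)
    (e : G ⧸ H ≃ β) {b : β} (he : e ((1 : G) : G ⧸ H) = b) :
    stabC (chomOfQuot H hHo hne e) b = H := by
  ext g
  rw [mem_stabC, chomOfQuot_apply, ← he, Equiv.symm_apply_apply]
  have h1 : g • ((1 : G) : G ⧸ H) = ((g : G) : G ⧸ H) := by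
    rw [MulAction.Quotient.smul_mk, smul_eq_mul, mul_one]
  rw [h1, Equiv.apply_eq_iff_eq, QuotientGroup.eq]
  simp

end Trans

section Count

lemma nat_card_sigma {ι : Type*} [Fintype ι] (f : ι → Type*) [∀ i, Finite (f i)] :
    Nat.card (Σ i, f i) = ∑ i : ι, Nat.card (f i) := by
  haveI := fun i => Fintype.ofFinite (f i)
  simp [Nat.card_eq_fintype_card, Fintype.card_sigma]

def pointedEquivEquiv {γ β : Type*} [DecidableEq γ] [DecidableEq β] (c : γ) (b : β) :
    {e : γ ≃ β // e c = b} ≃ ({x : γ // x ≠ c} ≃ {y : β // y ≠ b}) where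
  toFun p := Equiv.subtypeEquiv p.1 (fun x => not_congr
    ⟨fun h => by rw [h, p.2], fun h => p.1.injective (h.trans p.2.symm)⟩)
  invFun u := ⟨⟨fun x => if h : x = c then b else (u ⟨x, h⟩).1,
      fun y => if h : y = b then c else (u.symm ⟨y, h⟩).1,
      by
        intro x
        dsimp only
        by_cases h : x = c
        · rw [dif_pos h, dif_pos rfl, h]
        · rw [dif_neg h, dif_neg (u ⟨x, h⟩).2]
          simp,
      by
        intro y
        dsimp only
        by_cases h : y = b
        · rw [dif_pos h, dif_pos rfl, h]
        · rw [dif_neg h, dif_neg (u.symm ⟨y, h⟩).2]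
          simp⟩, dif_pos rfl⟩
  left_inv p := by
    apply Subtype.ext
    apply Equiv.ext
    intro x
    show (if h : x = c then b else ((p.1.subtypeEquiv _) ⟨x, h⟩).1) = p.1 x
    by_cases h : x = c
    · rw [dif_pos h, h, p.2]
    · rw [dif_neg h]
      rfl
  right_inv u := by
    apply Equiv.ext
    intro x
    apply Subtype.ext
    show (if h : (x : γ) = c then b else (u ⟨(x : γ), h⟩).1) = (u x).1
    rw [dif_neg x.2]

lemma card_pointedEquiv {γ β' : Type*} [Finite γ] [Fintype β'] (c : γ) (b : β')
    (hcard : Nat.card γ = Fintype.card β') :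
    Nat.card {e : γ ≃ β' // e c = b} = (Fintype.card β' - 1).factorial := by
  classical
  haveI := Fintype.ofFinite γ
  rw [Nat.card_congr (pointedEquivEquiv c b)]
  rw [Nat.card_eq_fintype_card] at hcard
  have h1 : Fintype.card {x : γ // x ≠ c} = Fintype.card β' - 1 := by
    have := Fintype.card_subtype_compl (fun x : γ => x = c)
    simpa [Fintype.card_subtype_eq, hcard] using this
  have h2 : Fintype.card {y : β' // y ≠ b} = Fintype.card β' - 1 := by
    have := Fintype.card_subtype_compl (fun y : β' => y = b)
    simpa [Fintype.card_subtype_eq] using this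
  rw [Nat.card_eq_fintype_card, Fintype.card_equiv (Fintype.equivOfCardEq (h1.trans h2.symm)), h1]

variable {G : Type*} [Group G] [TopologicalSpace G] [IsTopologicalGroup G]
variable {β : Type*} [Fintype β]

lemma Idx.index_ne_zero {b : β} (H : Idx G (Nat.card β)) : H.1.index ≠ 0 := by
  rw [H.2.2]
  exact Nat.card_ne_zero.mpr ⟨⟨b⟩, inferInstance⟩

noncomputable def stabMap (b : β) (ψ : TransCHom G β b) : Idx G (Nat.card β) :=
  ⟨stabC ψ.1 b, isOpen_stabC ψ.1 b, index_stabC ψ.1 b ψ.2⟩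

lemma chomOfQuot_quotEquiv (ψ : CHom G β) (b : β) (H : Subgroup G) (hH : stabC ψ b = H)
    (htr : ∀ x : β, ∃ g : G, ψ.1 g b = x) (hHo : IsOpen (H : Set G)) (hne : H.index ≠ 0) :
    chomOfQuot H hHo hne (quotEquiv ψ b H hH htr).1 = ψ := by
  apply Subtype.ext
  ext g x
  set e := (quotEquiv ψ b H hH htr).1 with hedef
  obtain ⟨g₀, hg₀⟩ := QuotientGroup.mk_surjective (e.symm x)
  have hx : ψ.1 g₀ b = x := by
    rw [← quotEquiv_apply_mk ψ b H hH htr g₀, ← hedef, hg₀, Equiv.apply_symm_apply]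
  show e (g • e.symm x) = ψ.1 g x
  rw [← hg₀, MulAction.Quotient.smul_mk, smul_eq_mul, hedef,
    quotEquiv_apply_mk ψ b H hH htr, map_mul, Equiv.Perm.mul_apply, hx]

noncomputable def fiberEquiv (b : β) (H : Idx G (Nat.card β)) :
    {ψ : TransCHom G β b // stabMap b ψ = H} ≃
      {e : G ⧸ H.1 ≃ β // e ((1 : G) : G ⧸ H.1) = b} where
  toFun p := quotEquiv p.1.1 b H.1 (congrArg Subtype.val p.2) p.1.2
  invFun e := ⟨⟨chomOfQuot H.1 H.2.1 (Idx.index_ne_zero (b := b) H) e.1,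
      chomOfQuot_trans H.1 H.2.1 (Idx.index_ne_zero (b := b) H) e.1 e.2⟩,
    Subtype.ext (stabC_chomOfQuot H.1 H.2.1 (Idx.index_ne_zero (b := b) H) e.1 e.2)⟩
  left_inv p := by
    apply Subtype.ext
    apply Subtype.ext
    exact chomOfQuot_quotEquiv p.1.1 b H.1 (congrArg Subtype.val p.2) p.1.2 H.2.1
      (Idx.index_ne_zero (b := b) H)
  right_inv e := by
    apply Subtype.ext
    apply Equiv.ext
    intro q
    induction q using QuotientGroup.induction_on with
    | H g =>
      show (quotEquiv _ b H.1 _ _).1 _ = e.1 _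
      show e.1 (g • e.1.symm b) = e.1 ((g : G) : G ⧸ H.1)
      have hsymm : e.1.symm b = ((1 : G) : G ⧸ H.1) := by
        rw [Equiv.symm_apply_eq]; exact e.2.symm
      rw [hsymm, MulAction.Quotient.smul_mk, smul_eq_mul, mul_one]

noncomputable def transEquivSigma (b : β) :
    TransCHom G β b ≃ Σ H : Idx G (Nat.card β), {e : G ⧸ H.1 ≃ β // e ((1 : G) : G ⧸ H.1) = b} :=
  (Equiv.sigmaFiberEquiv (stabMap b)).symm.trans (Equiv.sigmaCongrRight (fiberEquiv b))

lemma card_transCHom (b : β) (hfin : Finite (Idx G (Nat.card β))) :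
    Nat.card (TransCHom G β b) =
      Nat.card (Idx G (Nat.card β)) * (Fintype.card β - 1).factorial := by
  classical
  haveI := Fintype.ofFinite (Idx G (Nat.card β))
  rw [Nat.card_congr (transEquivSigma b)]
  haveI hfq : ∀ H : Idx G (Nat.card β), Finite (G ⧸ H.1) := fun H =>
    (Nat.card_pos_iff.mp (Nat.pos_of_ne_zero (Idx.index_ne_zero (b := b) H))).2
  have hcard : ∀ H : Idx G (Nat.card β),
      Nat.card {e : G ⧸ H.1 ≃ β // e ((1 : G) : G ⧸ H.1) = b} =
        (Fintype.card β - 1).factorial := by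
    intro H
    haveI := hfq H
    refine card_pointedEquiv _ b ?_
    have : Nat.card (G ⧸ H.1) = H.1.index := rfl
    rw [this, H.2.2, Nat.card_eq_fintype_card]
  rw [nat_card_sigma]
  rw [Finset.sum_congr rfl (fun H _ => hcard H), Finset.sum_const, Finset.card_univ, smul_eq_mul]
  exact congrArg (fun m => m * (Fintype.card β - 1).factorial)
    (Nat.card_eq_fintype_card (α := Idx G (Nat.card β))).symm

end Count

section Decomp
variable {G : Type*} [Group G] [TopologicalSpace G]
variable {α : Type*}

/-- Restriction of a continuous action to an invariant subset. -/
def restrictHom (φ : G →* Equiv.Perm α) (P : α → Prop)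
    (hiff : ∀ (g : G) (x : α), P x ↔ P (φ g x)) : G →* Equiv.Perm {x // P x} :=
  MonoidHom.mk' (fun g => (φ g).subtypePerm (fun x => (hiff g x).symm)) (by
    intro g h
    ext x
    simp [Equiv.Perm.subtypePerm_apply]
    rfl)

@[simp] lemma restrictHom_apply (φ : G →* Equiv.Perm α) (P : α → Prop)
    (hiff : ∀ (g : G) (x : α), P x ↔ P (φ g x)) (g : G) (x : {x // P x}) :
    (restrictHom φ P hiff g x : α) = φ g x.1 := rfl

lemma invariant_iff (φ : CHom G α) (P : α → Prop)
    (hinv : ∀ (g : G) (x : α), P x → P (φ.1 g x)) (g : G) (x : α) :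
    P x ↔ P (φ.1 g x) := by
  refine ⟨hinv g x, fun h => ?_⟩
  have := hinv g⁻¹ _ h
  rwa [map_inv, Equiv.Perm.inv_def, Equiv.symm_apply_apply] at this

/-- Restriction of a continuous action to an invariant subset, as a continuous action. -/
def restrictCHom (φ : CHom G α) (P : α → Prop)
    (hinv : ∀ (g : G) (x : α), P x → P (φ.1 g x)) : CHom G {x // P x} := by
  refine ⟨restrictHom φ.1 P (invariant_iff φ P hinv), ?_⟩
  rw [continuous_bot_iff]
  intro τ
  have hfib : ⇑(restrictHom φ.1 P (invariant_iff φ P hinv)) ⁻¹' {τ} =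
      ⇑φ.1 ⁻¹' {σ | ∀ x : {x // P x}, σ x.1 = (τ x).1} := by
    ext g
    simp only [Set.mem_preimage, Set.mem_singleton_iff, Set.mem_setOf_eq]
    constructor
    · intro h x
      rw [← h]
      rfl
    · intro h
      ext x
      exact h x
  rw [hfib]
  exact CHom.isOpen_preimage φ _

@[simp] lemma restrictCHom_apply (φ : CHom G α) (P : α → Prop)
    (hinv : ∀ (g : G) (x : α), P x → P (φ.1 g x)) (g : G) (x : {x // P x}) :
    ((restrictCHom φ P hinv).1 g x : α) = φ.1 g x.1 := rfl

/-- Combination of actions on a set and its complement, as a hom. -/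
def combineHom (P : α → Prop) [DecidablePred P]
    (ψ : CHom G {x // P x}) (χ : CHom G {x // ¬ P x}) : G →* Equiv.Perm α :=
  MonoidHom.mk' (fun g => Equiv.Perm.subtypeCongr (ψ.1 g) (χ.1 g)) (by
    intro g h
    show Equiv.Perm.subtypeCongr (ψ.1 (g * h)) (χ.1 (g * h)) =
      Equiv.Perm.subtypeCongr (ψ.1 g) (χ.1 g) * Equiv.Perm.subtypeCongr (ψ.1 h) (χ.1 h)
    rw [map_mul, map_mul]
    exact (Equiv.Perm.subtypeCongr.trans _ _ _ _).symm)

@[simp] lemma combineHom_apply (P : α → Prop) [DecidablePred P]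
    (ψ : CHom G {x // P x}) (χ : CHom G {x // ¬ P x}) (g : G) :
    combineHom P ψ χ g = Equiv.Perm.subtypeCongr (ψ.1 g) (χ.1 g) := rfl

/-- Combination of continuous actions on a set and its complement. -/
def combineCHom (P : α → Prop) [DecidablePred P]
    (ψ : CHom G {x // P x}) (χ : CHom G {x // ¬ P x}) : CHom G α := by
  refine ⟨combineHom P ψ χ, ?_⟩
  · rw [continuous_bot_iff]
    intro σ
    have hfib : ⇑(combineHom P ψ χ) ⁻¹' {σ} =
        (⇑ψ.1 ⁻¹' {τ | ∀ x : {x // P x}, (τ x : α) = σ x.1}) ∩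
          (⇑χ.1 ⁻¹' {ρ | ∀ x : {x // ¬ P x}, (ρ x : α) = σ x.1}) := by
      ext g
      simp only [Set.mem_preimage, Set.mem_singleton_iff, Set.mem_inter_iff, Set.mem_setOf_eq]
      constructor
      · intro h
        constructor
        · intro x
          rw [← h, combineHom_apply, Equiv.Perm.subtypeCongr.left_apply_subtype]
        · intro x
          rw [← h, combineHom_apply, Equiv.Perm.subtypeCongr.right_apply_subtype]
      · intro ⟨h1, h2⟩
        ext x
        rw [combineHom_apply]
        by_cases hx : P x
        · rw [Equiv.Perm.subtypeCongr.left_apply _ _ hx]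
          exact h1 ⟨x, hx⟩
        · rw [Equiv.Perm.subtypeCongr.right_apply _ _ hx]
          exact h2 ⟨x, hx⟩
    rw [hfib]
    exact (CHom.isOpen_preimage ψ _).inter (CHom.isOpen_preimage χ _)

@[simp] lemma combineCHom_apply_left (P : α → Prop) [DecidablePred P]
    (ψ : CHom G {x // P x}) (χ : CHom G {x // ¬ P x}) (g : G) {x : α} (hx : P x) :
    (combineCHom P ψ χ).1 g x = (ψ.1 g ⟨x, hx⟩ : α) := by
  show Equiv.Perm.subtypeCongr (ψ.1 g) (χ.1 g) x = _
  rw [Equiv.Perm.subtypeCongr.left_apply _ _ hx]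

@[simp] lemma combineCHom_coe (P : α → Prop) [DecidablePred P]
    (ψ : CHom G {x // P x}) (χ : CHom G {x // ¬ P x}) :
    (combineCHom P ψ χ).1 = combineHom P ψ χ := rfl

@[simp] lemma combineCHom_apply_right (P : α → Prop) [DecidablePred P]
    (ψ : CHom G {x // P x}) (χ : CHom G {x // ¬ P x}) (g : G) {x : α} (hx : ¬ P x) :
    (combineCHom P ψ χ).1 g x = (χ.1 g ⟨x, hx⟩ : α) := by
  show Equiv.Perm.subtypeCongr (ψ.1 g) (χ.1 g) x = _
  rw [Equiv.Perm.subtypeCongr.right_apply _ _ hx]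

end Decomp

section OrbitDecomp
variable {G : Type*} [Group G] [TopologicalSpace G]
variable {α : Type*} [Fintype α] [DecidableEq α]

open scoped Classical in
noncomputable def orbS (φ : CHom G α) (a : α) : Finset α :=
  Finset.univ.filter (fun x => ∃ g : G, φ.1 g a = x)

lemma mem_orbS {φ : CHom G α} {a x : α} : x ∈ orbS φ a ↔ ∃ g : G, φ.1 g a = x := by
  classical
  simp [orbS]

lemma orbS_invariant (φ : CHom G α) (a : α) (g : G) (x : α) (hx : x ∈ orbS φ a) :
    φ.1 g x ∈ orbS φ a := by
  obtain ⟨g₀, hg₀⟩ := mem_orbS.mp hx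
  exact mem_orbS.mpr ⟨g * g₀, by rw [map_mul, Equiv.Perm.mul_apply, hg₀]⟩

lemma orbS_invariant' (φ : CHom G α) (a : α) (g : G) (x : α) (hx : x ∉ orbS φ a) :
    φ.1 g x ∉ orbS φ a := by
  intro hc
  apply hx
  have := orbS_invariant φ a g⁻¹ _ hc
  rwa [map_inv, Equiv.Perm.inv_def, Equiv.symm_apply_apply] at this

noncomputable def orbMap (a : α) (φ : CHom G α) : {S : Finset α // a ∈ S} :=
  ⟨orbS φ a, mem_orbS.mpr ⟨1, by simp⟩⟩

noncomputable def fiberDecomp (a : α) (S : {S : Finset α // a ∈ S}) :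
    {φ : CHom G α // orbMap a φ = S} ≃
      TransCHom G {x : α // x ∈ S.1} (⟨a, S.2⟩ : {x : α // x ∈ S.1}) ×
        CHom G {x : α // x ∉ S.1} where
  toFun p :=
    (⟨restrictCHom p.1 (· ∈ S.1)
        (fun g x hx => by
          have hS : orbS p.1 a = S.1 := congrArg Subtype.val p.2
          rw [← hS] at hx ⊢
          exact orbS_invariant p.1 a g x hx),
      by
        intro x
        have hS : orbS p.1 a = S.1 := congrArg Subtype.val p.2
        have hx : x.1 ∈ orbS p.1 a := by rw [hS]; exact x.2
        obtain ⟨g, hg⟩ := mem_orbS.mp hx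
        exact ⟨g, Subtype.ext hg⟩⟩,
     restrictCHom p.1 (· ∉ S.1)
        (fun g x hx => by
          have hS : orbS p.1 a = S.1 := congrArg Subtype.val p.2
          rw [← hS] at hx ⊢
          exact orbS_invariant' p.1 a g x hx))
  invFun pc := ⟨combineCHom (· ∈ S.1) pc.1.1 pc.2, by
    apply Subtype.ext
    show orbS (combineCHom (· ∈ S.1) pc.1.1 pc.2) a = S.1
    ext x
    rw [mem_orbS]
    constructor
    · rintro ⟨g, rfl⟩
      rw [combineCHom_apply_left _ _ _ _ S.2]
      exact ((pc.1.1.1 g) ⟨a, S.2⟩).2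
    · intro hx
      obtain ⟨g, hg⟩ := pc.1.2 ⟨x, hx⟩
      refine ⟨g, ?_⟩
      rw [combineCHom_apply_left _ _ _ _ S.2, hg]⟩
  left_inv p := by
    apply Subtype.ext
    apply Subtype.ext
    ext g x
    by_cases hx : x ∈ S.1
    · rw [combineCHom_apply_left _ _ _ _ hx]
      rfl
    · rw [combineCHom_apply_right _ _ _ _ hx]
      rfl
  right_inv pc := by
    refine Prod.ext ?_ ?_
    · apply Subtype.ext
      apply Subtype.ext
      ext g x
      show (combineCHom (· ∈ S.1) pc.1.1 pc.2).1 g x.1 = (pc.1.1.1 g x : α)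
      rw [combineCHom_apply_left _ _ _ _ x.2]
    · apply Subtype.ext
      ext g x
      show (combineCHom (· ∈ S.1) pc.1.1 pc.2).1 g x.1 = (pc.2.1 g x : α)
      rw [combineCHom_apply_right _ _ _ _ x.2]

noncomputable def decompEquiv (a : α) :
    CHom G α ≃ Σ S : {S : Finset α // a ∈ S},
      TransCHom G {x : α // x ∈ S.1} (⟨a, S.2⟩ : {x : α // x ∈ S.1}) ×
        CHom G {x : α // x ∉ S.1} :=
  (Equiv.sigmaFiberEquiv (orbMap a)).symm.trans (Equiv.sigmaCongrRight (fiberDecomp a))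

end OrbitDecomp

section Assemble
variable {G : Type*} [Group G] [TopologicalSpace G] [IsTopologicalGroup G]

noncomputable def contHomCount' (G : Type*) [Group G] [TopologicalSpace G] (n : ℕ) : ℕ :=
  Nat.card (CHom G (Fin n))

noncomputable def openSubgroupCount' (G : Type*) [Group G] [TopologicalSpace G] (n : ℕ) : ℕ :=
  Nat.card (Idx G n)

lemma card_CHom (β : Type*) [Fintype β] :
    Nat.card (CHom G β) = contHomCount' G (Fintype.card β) :=
  Nat.card_congr (CHom.congr (Fintype.equivFin β))

lemma finite_CHom (hfin_t : ∀ n : ℕ, Finite (CHom G (Fin n))) (β : Type*) [Fintype β] :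
    Finite (CHom G β) := by
  have := hfin_t (Fintype.card β)
  exact Finite.of_equiv _ (CHom.congr (Fintype.equivFin β)).symm

lemma card_filter_mem (n k : ℕ) :
    (((Finset.univ : Finset (Finset (Fin (n + 1)))).filter
        (fun S => (0 : Fin (n + 1)) ∈ S)).filter (fun S => S.card = k + 1)).card =
      n.choose k := by
  classical
  have hu : ((Finset.univ : Finset (Fin (n + 1))).erase 0).card = n := by
    rw [Finset.card_erase_of_mem (Finset.mem_univ 0), Finset.card_univ, Fintype.card_fin]
    omega
  have hbij : (((Finset.univ : Finset (Finset (Fin (n + 1)))).filter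
        (fun S => (0 : Fin (n + 1)) ∈ S)).filter (fun S => S.card = k + 1)).card =
      (Finset.powersetCard k ((Finset.univ : Finset (Fin (n + 1))).erase 0)).card := by
    refine Finset.card_bij' (fun S _ => S.erase 0) (fun T _ => insert 0 T) ?_ ?_ ?_ ?_
    · intro S hS
      simp only [Finset.mem_filter, Finset.mem_univ, true_and] at hS
      rw [Finset.mem_powersetCard]
      exact ⟨Finset.erase_subset_erase 0 (Finset.subset_univ S),
        by rw [Finset.card_erase_of_mem hS.1, hS.2]; omega⟩
    · intro T hT
      rw [Finset.mem_powersetCard] at hT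
      have h0 : (0 : Fin (n + 1)) ∉ T := fun hc => (Finset.mem_erase.mp (hT.1 hc)).1 rfl
      simp only [Finset.mem_filter, Finset.mem_univ, true_and]
      exact ⟨Finset.mem_insert_self 0 T, by rw [Finset.card_insert_of_notMem h0, hT.2]⟩
    · intro S hS
      simp only [Finset.mem_filter, Finset.mem_univ, true_and] at hS
      exact Finset.insert_erase hS.1
    · intro T hT
      rw [Finset.mem_powersetCard] at hT
      have h0 : (0 : Fin (n + 1)) ∉ T := fun hc => (Finset.mem_erase.mp (hT.1 hc)).1 rfl
      exact Finset.erase_insert h0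
  rw [hbij, Finset.card_powersetCard, hu]

lemma t_rec (hfin_t : ∀ n : ℕ, Finite (CHom G (Fin n)))
    (hfin_M : ∀ n : ℕ, 0 < n → Finite (Idx G n)) (n : ℕ) :
    contHomCount' G (n + 1) = ∑ j ∈ Finset.range (n + 1),
      n.choose j * (n - j).factorial * openSubgroupCount' G (n + 1 - j) *
        contHomCount' G j := by
  classical
  haveI hfinC : ∀ (β : Type) [Fintype β], Finite (CHom G β) := fun β _ => finite_CHom hfin_t β
  haveI hf1 : ∀ S : {S : Finset (Fin (n + 1)) // 0 ∈ S},
      Finite (CHom G {x : Fin (n + 1) // x ∈ S.1}) := fun S => hfinC _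
  haveI hf2 : ∀ S : {S : Finset (Fin (n + 1)) // 0 ∈ S},
      Finite (CHom G {x : Fin (n + 1) // x ∉ S.1}) := fun S => hfinC _
  haveI hf3 : ∀ S : {S : Finset (Fin (n + 1)) // 0 ∈ S},
      Finite (TransCHom G {x : Fin (n + 1) // x ∈ S.1} ⟨0, S.2⟩) := fun S => by
    unfold TransCHom; infer_instance
  haveI hf4 : ∀ S : {S : Finset (Fin (n + 1)) // 0 ∈ S},
      Finite (TransCHom G {x : Fin (n + 1) // x ∈ S.1} ⟨0, S.2⟩ ×
        CHom G {x : Fin (n + 1) // x ∉ S.1}) := fun S => inferInstance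
  -- decompose
  have hdec := Nat.card_congr (decompEquiv (G := G) (α := Fin (n + 1)) 0)
  have hstep : contHomCount' G (n + 1) =
      ∑ S : {S : Finset (Fin (n + 1)) // 0 ∈ S},
        Nat.card (TransCHom G {x : Fin (n + 1) // x ∈ S.1} ⟨0, S.2⟩) *
          Nat.card (CHom G {x : Fin (n + 1) // x ∉ S.1}) := by
    rw [contHomCount', hdec, nat_card_sigma]
    exact Finset.sum_congr rfl fun S _ => Nat.card_prod _ _
  -- evaluate each term
  have hterm : ∀ S : {S : Finset (Fin (n + 1)) // 0 ∈ S},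
      Nat.card (TransCHom G {x : Fin (n + 1) // x ∈ S.1} ⟨0, S.2⟩) *
        Nat.card (CHom G {x : Fin (n + 1) // x ∉ S.1}) =
      openSubgroupCount' G S.1.card * (S.1.card - 1).factorial *
        contHomCount' G (n + 1 - S.1.card) := by
    intro S
    have hpos : 0 < S.1.card := Finset.card_pos.mpr ⟨0, S.2⟩
    have h1 : Nat.card {x : Fin (n + 1) // x ∈ S.1} = S.1.card := by
      rw [Nat.card_eq_fintype_card]
      exact Fintype.card_coe S.1
    have h1' : Fintype.card {x : Fin (n + 1) // x ∈ S.1} = S.1.card := Fintype.card_coe S.1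
    haveI hidx : Finite (Idx G (Nat.card {x : Fin (n + 1) // x ∈ S.1})) := by
      rw [h1]; exact hfin_M _ hpos
    have h2 := card_transCHom (G := G) (⟨0, S.2⟩ : {x : Fin (n + 1) // x ∈ S.1}) hidx
    have h3 : Nat.card (Idx G (Nat.card {x : Fin (n + 1) // x ∈ S.1})) =
        openSubgroupCount' G S.1.card := by rw [h1]; rfl
    have h4 : Nat.card (CHom G {x : Fin (n + 1) // x ∉ S.1}) =
        contHomCount' G (n + 1 - S.1.card) := by
      rw [card_CHom]
      congr 1
      have := Fintype.card_subtype_compl (fun x : Fin (n + 1) => x ∈ S.1)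
      rw [this, Fintype.card_fin, h1']
    rw [h2, h3, h1', h4]
  rw [hstep, Finset.sum_congr rfl fun S _ => hterm S]
  -- sum over subsets containing 0, grouped by size
  set F : ℕ → ℕ := fun k =>
    openSubgroupCount' G k * (k - 1).factorial * contHomCount' G (n + 1 - k) with hF
  set A : Finset (Finset (Fin (n + 1))) :=
    (Finset.univ.filter (fun S => (0 : Fin (n + 1)) ∈ S)) with hA
  have hsubty := Finset.sum_subtype (s := A) (p := fun S : Finset (Fin (n + 1)) => 0 ∈ S)
    (F := inferInstance) (by intro S; simp [hA]) (fun S => F S.card)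
  have hfib : ∑ S ∈ A, F S.card =
      ∑ k ∈ Finset.range (n + 2), ∑ S ∈ A.filter (fun S => S.card = k), F S.card := by
    refine (Finset.sum_fiberwise_of_maps_to ?_ _).symm
    intro S _
    rw [Finset.mem_range]
    have := Finset.card_le_card (Finset.subset_univ S)
    rw [Finset.card_univ, Fintype.card_fin] at this
    omega
  have hinner : ∀ k, ∑ S ∈ A.filter (fun S => S.card = k), F S.card =
      (A.filter (fun S => S.card = k)).card * F k := by
    intro k
    rw [Finset.sum_congr rfl (fun S hS => by
      rw [(Finset.mem_filter.mp hS).2]), Finset.sum_const, smul_eq_mul]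
  show ∑ S : {S : Finset (Fin (n + 1)) // 0 ∈ S}, F S.1.card = _
  rw [← hsubty, hfib, Finset.sum_congr rfl fun k _ => hinner k, Finset.sum_range_succ']
  have hzero : (A.filter (fun S => S.card = 0)).card * F 0 = 0 := by
    have : A.filter (fun S => S.card = 0) = ∅ := by
      rw [Finset.filter_eq_empty_iff]
      intro S hS
      have h0 : (0 : Fin (n + 1)) ∈ S := by
        rw [hA] at hS
        exact (Finset.mem_filter.mp hS).2
      have := Finset.card_pos.mpr ⟨0, h0⟩
      omega
    rw [this]
    simp
  rw [hzero, add_zero]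
  have hcnt : ∀ i, (A.filter (fun S => S.card = i + 1)).card = n.choose i :=
    fun i => card_filter_mem n i
  rw [Finset.sum_congr rfl fun i _ => by rw [hcnt i]]
  -- reflect the sum
  rw [← Finset.sum_range_reflect]
  refine Finset.sum_congr rfl fun j hj => ?_
  rw [Finset.mem_range] at hj
  have hj' : j ≤ n := by omega
  simp only [hF, Nat.add_sub_cancel]
  rw [Nat.choose_symm hj']
  have e2 : n - j + 1 = n + 1 - j := by omega
  have e3 : n + 1 - (n - j + 1) = j := by omega
  rw [e3, e2]
  ring

end Assemble

section Glue
variable {G : Type*} [Group G] [TopologicalSpace G] [IsTopologicalGroup G]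

lemma contHomCount'_zero : contHomCount' G 0 = 1 := by
  have hsub : ∀ a b : Equiv.Perm (Fin 0), a = b := fun a b => by ext x; exact x.elim0
  haveI : Unique (CHom G (Fin 0)) :=
    { default := ⟨1, by
        rw [continuous_bot_iff]
        intro σ
        have h : ⇑(1 : G →* Equiv.Perm (Fin 0)) ⁻¹' {σ} = Set.univ := by
          ext g; simp [hsub (1 : Equiv.Perm (Fin 0)) σ]
        rw [h]; exact isOpen_univ⟩
      uniq := fun φ => Subtype.ext (MonoidHom.ext fun g => hsub _ _) }
  exact Nat.card_unique

lemma contHomCount_eq (n : ℕ) : contHomCount G n = contHomCount' G n := rfl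

lemma openSubgroupCount_eq (n : ℕ) : openSubgroupCount G n = openSubgroupCount' G n := rfl

end Glue

end WohlfahrtAux

/-- Wohlfahrt's identity for topological groups.
`exp (∑_{H} x^[G:H] / [G:H]) = ∑_{n ≥ 0} (t_n / n!) x^n` in `ℚ[[x]]`, where `H` runs
over the open finite-index subgroups of `G` and `t_n` is the number of continuous
homomorphisms `G → S_n`.  (The coefficient `M_0/0` is `0` by convention `x/0 = 0`.) -/
theorem wohlfahrt_identity (G : Type*) [Group G] [TopologicalSpace G] [IsTopologicalGroup G]
    (hfin_t : ∀ n : ℕ,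
      Finite {φ : G →* Equiv.Perm (Fin n) // @Continuous G (Equiv.Perm (Fin n)) _ ⊥ ⇑φ})
    (hfin_M : ∀ n : ℕ, 0 < n → Finite {H : Subgroup G // IsOpen (H : Set G) ∧ H.index = n}) :
    expComp (PowerSeries.mk fun n => (openSubgroupCount G n : ℚ) / (n : ℚ)) =
      PowerSeries.mk fun n => (contHomCount G n : ℚ) / (n.factorial : ℚ) := by
  classical
  open PowerSeries in
  set A : PowerSeries ℚ := PowerSeries.mk fun n => (openSubgroupCount G n : ℚ) / (n : ℚ)
    with hAdef
  have hA0 : constantCoeff A = 0 := by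
    rw [← PowerSeries.coeff_zero_eq_constantCoeff, hAdef, PowerSeries.coeff_mk]
    simp
  have hcoeffA : ∀ j : ℕ, PowerSeries.coeff j A = (openSubgroupCount G j : ℚ) / (j : ℚ) := by
    intro j; rw [hAdef, PowerSeries.coeff_mk]
  refine PowerSeries.ext fun n => ?_
  rw [PowerSeries.coeff_mk]
  induction n using Nat.strong_induction_on with
  | _ n ih =>
    cases n with
    | zero =>
      rw [expComp_coeff_zero]
      have h0 : contHomCount G 0 = 1 := contHomCount'_zero
      rw [h0]
      norm_num
    | succ m =>
      have hrec := expComp_coeff_succ A hA0 m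
      have hsum : ∀ j ∈ Finset.range (m + 1),
          PowerSeries.coeff j (expComp A) *
            (((m + 1 - j : ℕ) : ℚ) * PowerSeries.coeff (m + 1 - j) A) =
          ((contHomCount G j : ℚ) / (j.factorial : ℚ)) *
            (openSubgroupCount G (m + 1 - j) : ℚ) := by
        intro j hj
        rw [Finset.mem_range] at hj
        rw [ih j (by omega), hcoeffA]
        have hne : ((m + 1 - j : ℕ) : ℚ) ≠ 0 := Nat.cast_ne_zero.mpr (by omega)
        rw [mul_div_cancel₀ _ hne]
      rw [Finset.sum_congr rfl hsum] at hrec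
      -- the combinatorial recurrence
      have hT' : contHomCount G (m + 1) = ∑ j ∈ Finset.range (m + 1),
          m.choose j * (m - j).factorial * openSubgroupCount G (m + 1 - j) *
            contHomCount G j := t_rec (G := G) hfin_t hfin_M m
      have hfacne : ∀ k : ℕ, ((k.factorial : ℚ)) ≠ 0 := fun k =>
        Nat.cast_ne_zero.mpr k.factorial_ne_zero
      have key : (contHomCount G (m + 1) : ℚ) / (m.factorial : ℚ) =
          ∑ j ∈ Finset.range (m + 1),
            ((contHomCount G j : ℚ) / (j.factorial : ℚ)) *
              (openSubgroupCount G (m + 1 - j) : ℚ) := by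
        rw [hT']
        push_cast
        rw [Finset.sum_div]
        refine Finset.sum_congr rfl fun j hj => ?_
        rw [Finset.mem_range] at hj
        have hj' : j ≤ m := by omega
        have hfact : ((m.choose j : ℚ)) * (j.factorial : ℚ) * ((m - j).factorial : ℚ) =
            (m.factorial : ℚ) := by
          exact_mod_cast Nat.choose_mul_factorial_mul_factorial hj'
        rw [div_mul_eq_mul_div, div_eq_div_iff (hfacne m) (hfacne j)]
        linear_combination ((openSubgroupCount G (m + 1 - j) : ℚ) *
          (contHomCount G j : ℚ)) * hfact
      rw [← key] at hrec
      -- conclude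
      have hm1 : ((m : ℚ) + 1) ≠ 0 := by positivity
      rw [Nat.factorial_succ]
      push_cast
      rw [eq_div_iff (by positivity : ((m : ℚ) + 1) * (m.factorial : ℚ) ≠ 0)]
      calc PowerSeries.coeff (m + 1) (expComp A) * (((m : ℚ) + 1) * (m.factorial : ℚ))
          = (((m : ℚ) + 1) * PowerSeries.coeff (m + 1) (expComp A)) * (m.factorial : ℚ) := by
            ring
        _ = ((contHomCount G (m + 1) : ℚ) / (m.factorial : ℚ)) * (m.factorial : ℚ) := by
            rw [hrec]
        _ = (contHomCount G (m + 1) : ℚ) := div_mul_cancel₀ _ (hfacne m)
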